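/- Let σ(E) := (P/2)·((dev E + 2(tr E)·I)/Δ(E) − I) be the viscous-plastic stress with Δ(E) := sqrt(dev E : dev E + 4(tr E)² + Δ_min²) and P ≥ 0. Then the Frobenius norm of σ(E) is bounded uniformly in E: ‖σ(E)‖_F ≤ (P/2)·(‖dev E‖_F/Δ(E) + 2·√2·|tr E|/Δ(E) + √2) ≤ (P/2)·(1 + √2 + √2) , i.e. the stress is bounded independently of the strain rate E. -/

import Mathlib

open Matrix

noncomputable def frob (A B : Matrix (Fin 2) (Fin 2) ℝ) : ℝ := ∑ i, ∑ j, A i j * B i j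

noncomputable def frobNorm (A : Matrix (Fin 2) (Fin 2) ℝ) : ℝ := Real.sqrt (frob A A)

noncomputable def dev (E : Matrix (Fin 2) (Fin 2) ℝ) : Matrix (Fin 2) (Fin 2) ℝ :=
  E - (E.trace / 2) • 1

noncomputable def Δd (dmin : ℝ) (E : Matrix (Fin 2) (Fin 2) ℝ) : ℝ :=
  Real.sqrt (frob (dev E) (dev E) + 4 * E.trace ^ 2 + dmin ^ 2)

noncomputable def stress (P dmin : ℝ) (E : Matrix (Fin 2) (Fin 2) ℝ) :
    Matrix (Fin 2) (Fin 2) ℝ :=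
  (P / 2) • ((Δd dmin E)⁻¹ • (dev E + (2 * E.trace) • 1) - 1)

lemma frob_expand (A B : Matrix (Fin 2) (Fin 2) ℝ) :
    frob A B = A 0 0 * B 0 0 + A 0 1 * B 0 1 + A 1 0 * B 1 0 + A 1 1 * B 1 1 := by
  simp [frob, Fin.sum_univ_two]; ring

lemma frob_self_nonneg (A : Matrix (Fin 2) (Fin 2) ℝ) : 0 ≤ frob A A := by
  rw [frob_expand]
  nlinarith [sq_nonneg (A 0 0), sq_nonneg (A 0 1), sq_nonneg (A 1 0), sq_nonneg (A 1 1)]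

lemma frob_le (A B : Matrix (Fin 2) (Fin 2) ℝ) : frob A B ≤ frobNorm A * frobNorm B := by
  have h1 : (frob A B) ^ 2 ≤ frob A A * frob B B := by
    rw [frob_expand, frob_expand, frob_expand]
    nlinarith [sq_nonneg (A 0 0 * B 0 1 - A 0 1 * B 0 0),
      sq_nonneg (A 0 0 * B 1 0 - A 1 0 * B 0 0), sq_nonneg (A 0 0 * B 1 1 - A 1 1 * B 0 0),
      sq_nonneg (A 0 1 * B 1 0 - A 1 0 * B 0 1), sq_nonneg (A 0 1 * B 1 1 - A 1 1 * B 0 1),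
      sq_nonneg (A 1 0 * B 1 1 - A 1 1 * B 1 0)]
  calc frob A B ≤ Real.sqrt ((frob A B) ^ 2) := by
        rw [Real.sqrt_sq_eq_abs]; exact le_abs_self _
    _ ≤ Real.sqrt (frob A A * frob B B) := Real.sqrt_le_sqrt h1
    _ = frobNorm A * frobNorm B := Real.sqrt_mul (frob_self_nonneg A) _

lemma frobNorm_nonneg (A : Matrix (Fin 2) (Fin 2) ℝ) : 0 ≤ frobNorm A := Real.sqrt_nonneg _

lemma frobNorm_add_le (A B : Matrix (Fin 2) (Fin 2) ℝ) :
    frobNorm (A + B) ≤ frobNorm A + frobNorm B := by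
  have hA := frob_self_nonneg A
  have hB := frob_self_nonneg B
  have e1 : frob (A + B) (A + B) = frob A A + 2 * frob A B + frob B B := by
    simp only [frob_expand, Matrix.add_apply]; ring
  have e2 : frob (A + B) (A + B) ≤ (frobNorm A + frobNorm B) ^ 2 := by
    have h1 := frob_le A B
    have h2 : frobNorm A ^ 2 = frob A A := Real.sq_sqrt hA
    have h3 : frobNorm B ^ 2 = frob B B := Real.sq_sqrt hB
    nlinarith
  calc frobNorm (A + B) ≤ Real.sqrt ((frobNorm A + frobNorm B) ^ 2) :=
        Real.sqrt_le_sqrt e2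
    _ = frobNorm A + frobNorm B := by
        rw [Real.sqrt_sq (add_nonneg (frobNorm_nonneg A) (frobNorm_nonneg B))]

lemma frobNorm_smul (c : ℝ) (A : Matrix (Fin 2) (Fin 2) ℝ) :
    frobNorm (c • A) = |c| * frobNorm A := by
  have : frob (c • A) (c • A) = c ^ 2 * frob A A := by
    simp only [frob_expand, Matrix.smul_apply, smul_eq_mul]; ring
  rw [frobNorm, this, Real.sqrt_mul (sq_nonneg c), Real.sqrt_sq_eq_abs, frobNorm]

lemma frob_one_one : frob (1 : Matrix (Fin 2) (Fin 2) ℝ) 1 = 2 := by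
  simp [frob, Fin.sum_univ_two, Matrix.one_apply]

lemma frobNorm_one : frobNorm (1 : Matrix (Fin 2) (Fin 2) ℝ) = Real.sqrt 2 := by
  rw [frobNorm, frob_one_one]

theorem stress_bounded (P dmin : ℝ) (hP : 0 ≤ P) (hdmin : 0 < dmin)
    (E : Matrix (Fin 2) (Fin 2) ℝ) (hE : E.IsSymm) :
    frobNorm (stress P dmin E) ≤
      (P / 2) * (frobNorm (dev E) / Δd dmin E + 2 * Real.sqrt 2 * |E.trace| / Δd dmin E +
        Real.sqrt 2) ∧
    (P / 2) * (frobNorm (dev E) / Δd dmin E + 2 * Real.sqrt 2 * |E.trace| / Δd dmin E +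
        Real.sqrt 2) ≤ (P / 2) * (1 + Real.sqrt 2 + Real.sqrt 2) := by
  set D := dev E with hD
  set t := E.trace with ht
  set Δ := Δd dmin E with hΔdef
  have hDD : 0 ≤ frob D D := frob_self_nonneg D
  have hsum : 0 < frob D D + 4 * t ^ 2 + dmin ^ 2 := by positivity
  have hΔpos : 0 < Δ := Real.sqrt_pos.mpr hsum
  have hΔsq : Δ ^ 2 = frob D D + 4 * t ^ 2 + dmin ^ 2 := Real.sq_sqrt hsum.le
  -- key bounds
  have hDle : frobNorm D ≤ Δ := by
    rw [frobNorm, hΔdef, Δd]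
    apply Real.sqrt_le_sqrt; nlinarith
  have htle : 2 * |t| ≤ Δ := by
    have : 2 * |t| = Real.sqrt (4 * t ^ 2) := by
      rw [show (4 : ℝ) * t ^ 2 = (2 * |t|) ^ 2 by rw [mul_pow, sq_abs]; ring,
        Real.sqrt_sq (by positivity)]
    rw [this, hΔdef, Δd]
    apply Real.sqrt_le_sqrt; nlinarith
  -- decompose X
  have hX : (Δ⁻¹ • (D + (2 * t) • 1) - 1 : Matrix (Fin 2) (Fin 2) ℝ)
      = Δ⁻¹ • D + ((Δ⁻¹ * (2 * t)) • (1 : Matrix (Fin 2) (Fin 2) ℝ) +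
        (-1 : ℝ) • (1 : Matrix (Fin 2) (Fin 2) ℝ)) := by
    rw [smul_add, smul_smul]
    ext i j
    simp [Matrix.sub_apply, Matrix.add_apply, Matrix.smul_apply]
    ring
  have hXbound : frobNorm (Δ⁻¹ • (D + (2 * t) • 1) - 1) ≤
      frobNorm D / Δ + 2 * Real.sqrt 2 * |t| / Δ + Real.sqrt 2 := by
    rw [hX]
    calc frobNorm (Δ⁻¹ • D + ((Δ⁻¹ * (2 * t)) • (1 : Matrix (Fin 2) (Fin 2) ℝ) +
          (-1 : ℝ) • (1 : Matrix (Fin 2) (Fin 2) ℝ)))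
        ≤ frobNorm (Δ⁻¹ • D) + frobNorm ((Δ⁻¹ * (2 * t)) • (1 : Matrix (Fin 2) (Fin 2) ℝ) +
          (-1 : ℝ) • (1 : Matrix (Fin 2) (Fin 2) ℝ)) := frobNorm_add_le _ _
      _ ≤ frobNorm (Δ⁻¹ • D) + (frobNorm ((Δ⁻¹ * (2 * t)) • (1 : Matrix (Fin 2) (Fin 2) ℝ)) +
          frobNorm ((-1 : ℝ) • (1 : Matrix (Fin 2) (Fin 2) ℝ))) := by
          exact add_le_add le_rfl (frobNorm_add_le _ _)
      _ = frobNorm D / Δ + 2 * Real.sqrt 2 * |t| / Δ + Real.sqrt 2 := by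
          rw [frobNorm_smul, frobNorm_smul, frobNorm_smul, frobNorm_one]
          rw [abs_mul, abs_inv, abs_of_pos hΔpos, abs_mul]
          simp [abs_of_nonneg, frobNorm_nonneg]
          field_simp
          ring
  constructor
  · have : frobNorm (stress P dmin E) =
        (P / 2) * frobNorm (Δ⁻¹ • (D + (2 * t) • 1) - 1) := by
      rw [stress, frobNorm_smul, abs_of_nonneg (by positivity)]
    rw [this]
    exact mul_le_mul_of_nonneg_left hXbound (by positivity)
  · apply mul_le_mul_of_nonneg_left _ (by positivity)
    have h1 : frobNorm D / Δ ≤ 1 := by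
      rw [div_le_one hΔpos]; exact hDle
    have h2 : 2 * Real.sqrt 2 * |t| / Δ ≤ Real.sqrt 2 := by
      rw [div_le_iff₀ hΔpos]
      have hs2 : (0:ℝ) ≤ Real.sqrt 2 := Real.sqrt_nonneg 2
      nlinarith
    linarith
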